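/- Let δ ∈ (0,1), θ > 0, p ∈ [0,1], and b > 0. Then the series below converges absolutely and 2∫_0^1 [1 − (1 − pθ r^{2/δ}/(1+θ r^{2/δ}))^b]·r^{−3} dr = ∑_{k=1}^∞ (−1)^{k+1} · binom(b,k) · (pθ)^k · δ·∫_0^1 x^{k−δ−1}(1+θx)^{−k} dx, where by Euler's integral representation δ·∫_0^1 x^{k−δ−1}(1+θx)^{−k} dx = (δ/(k−δ))·₂F₁(k, k−δ; k+1−δ; −θ). (This is the analytic core of the formula M_b(p)^{−1} = 1 − ∑_{k=1}^∞ binom(b,k)(−pθ)^k (δ/(k−δ)) ₂F₁(k,k−δ;k+1−δ;−θ) for the b-th moment of the conditional success probability in a Poisson cellular network in which interfering base stations are active independently with probability p.) -/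

import Mathlib

open Real MeasureTheory

/-- Generalized binomial coefficient `binom(b,k) = b(b-1)⋯(b-k+1)/k!` for real `b`. -/
noncomputable def gbinom (b : ℝ) (k : ℕ) : ℝ :=
  Polynomial.eval b (descPochhammer ℝ k) / (Nat.factorial k : ℝ)

/-- The Gauss hypergeometric function `₂F₁(a,b;c;x)` defined through Euler's integral
representation `₂F₁(a,b;c;x) = Γ(c)/(Γ(b)Γ(c-b)) ∫_0^1 t^{b-1}(1-t)^{c-b-1}(1-xt)^{-a} dt`. -/
noncomputable def hyp2F1 (a b c x : ℝ) : ℝ :=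
  Real.Gamma c / (Real.Gamma b * Real.Gamma (c - b)) *
    ∫ t in Set.Ioo (0:ℝ) 1, t ^ (b - 1) * (1 - t) ^ (c - b - 1) * (1 - x * t) ^ (-a)

/-- For `δ ∈ (0,1)`, `θ > 0`, `p ∈ [0,1]`, `b > 0`: the series below converges absolutely and
`2∫_0^1 (1 - (1 - pθr^{2/δ}/(1+θr^{2/δ}))^b) r^{-3} dr
  = ∑_{k≥1} (-1)^{k+1} binom(b,k) (pθ)^k · δ∫_0^1 x^{k-δ-1}(1+θx)^{-k} dx`,
where by Euler's integral representation
`δ∫_0^1 x^{k-δ-1}(1+θx)^{-k} dx = (δ/(k-δ)) ₂F₁(k,k-δ;k+1-δ;-θ)`. -/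
lemma gbinom_zero (b : ℝ) : gbinom b 0 = 1 := by simp [gbinom]

lemma gbinom_succ (b : ℝ) (k : ℕ) :
    gbinom b (k + 1) = (b - k) / (k + 1) * gbinom b k := by
  have h := descPochhammer_succ_right (R := ℝ) k
  unfold gbinom
  rw [h, Polynomial.eval_mul, Nat.factorial_succ]
  push_cast
  rw [Polynomial.eval_sub, Polynomial.eval_X, Polynomial.eval_natCast]
  have h1 : ((k : ℝ) + 1) ≠ 0 := by positivity
  have h2 : (Nat.factorial k : ℝ) ≠ 0 := by positivity
  field_simp

lemma gbinom_abs_le (b : ℝ) (hb : 0 < b) :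
    ∃ M : ℝ, 0 ≤ M ∧ ∀ k, |gbinom b k| ≤ M := by
  set k₀ := ⌈b⌉₊ with hk₀
  have hbk : (b : ℝ) ≤ k₀ := Nat.le_ceil b
  have hdec : ∀ n : ℕ, |gbinom b (k₀ + n)| ≤ |gbinom b k₀| := by
    intro n
    induction n with
    | zero => simp
    | succ n ih =>
      have hm : (b : ℝ) ≤ (k₀ + n : ℕ) := by push_cast; linarith [Nat.cast_nonneg (α := ℝ) n]
      have : gbinom b (k₀ + n + 1) = (b - (k₀ + n : ℕ)) / ((k₀ + n : ℕ) + 1) * gbinom b (k₀ + n) :=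
        gbinom_succ b (k₀ + n)
      have hc : (0:ℝ) ≤ ((k₀ + n : ℕ) : ℝ) := Nat.cast_nonneg _
      have habs : |(b - (k₀ + n : ℕ)) / ((k₀ + n : ℕ) + 1)| ≤ 1 := by
        rw [abs_div, abs_of_nonneg (by linarith : (0:ℝ) ≤ ((k₀ + n : ℕ) : ℝ) + 1),
          div_le_one (by linarith), abs_sub_comm, abs_of_nonneg (by linarith)]
        linarith
      calc |gbinom b (k₀ + (n + 1))| = |(b - (k₀ + n : ℕ)) / ((k₀ + n : ℕ) + 1)| * |gbinom b (k₀ + n)| := by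
              rw [show k₀ + (n + 1) = (k₀ + n) + 1 from rfl, this, abs_mul]
        _ ≤ 1 * |gbinom b (k₀ + n)| := by
              apply mul_le_mul_of_nonneg_right habs (abs_nonneg _)
        _ ≤ |gbinom b k₀| := by rw [one_mul]; exact ih
  refine ⟨∑ j ∈ Finset.range (k₀ + 1), |gbinom b j|, Finset.sum_nonneg fun _ _ => abs_nonneg _, ?_⟩
  intro k
  rcases le_or_gt k k₀ with h | h
  · exact Finset.single_le_sum (f := fun j => |gbinom b j|) (fun _ _ => abs_nonneg _)
      (Finset.mem_range.2 (Nat.lt_succ_of_le h))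
  · have : k = k₀ + (k - k₀) := by omega
    rw [this]
    exact le_trans (hdec _) (Finset.single_le_sum (f := fun j => |gbinom b j|)
      (fun _ _ => abs_nonneg _) (Finset.mem_range.2 (Nat.lt_succ_of_le le_rfl)))

noncomputable def gS (b y : ℝ) : ℝ := ∑' k : ℕ, gbinom b k * y ^ k
noncomputable def gD (b y : ℝ) : ℝ := ∑' k : ℕ, gbinom b k * ((k : ℝ) * y ^ (k - 1))

lemma hasSum_gbinom (b : ℝ) (hb : 0 < b) {x : ℝ} (hx : |x| < 1) :
    HasSum (fun k : ℕ => gbinom b k * x ^ k) ((1 + x) ^ b) := by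
  obtain ⟨M, hM0, hM⟩ := gbinom_abs_le b hb
  have hsum : ∀ y : ℝ, |y| < 1 → Summable fun k : ℕ => gbinom b k * y ^ k := by
    intro y hy
    apply Summable.of_norm_bounded (g := fun k => M * |y| ^ k)
      ((summable_geometric_of_lt_one (abs_nonneg y) hy).mul_left M)
    intro k
    rw [norm_mul, norm_pow]
    exact mul_le_mul_of_nonneg_right (hM k) (by positivity)
  have hdsum : ∀ r : ℝ, 0 ≤ r → r < 1 →
      Summable fun k : ℕ => M * ((k : ℝ) * r ^ (k - 1)) := by
    intro r hr0 hr1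
    apply Summable.mul_left
    rw [← summable_nat_add_iff 1]
    have h1 : Summable fun k : ℕ => ((k : ℝ) + 1) * r ^ k := by
      have := summable_pow_mul_geometric_of_norm_lt_one (R := ℝ) 1
        (by rwa [Real.norm_eq_abs, abs_of_nonneg hr0])
      simpa [add_mul, pow_one] using this.add (summable_geometric_of_lt_one hr0 hr1)
    convert h1 using 2 with k
    · rfl
    push_cast
    simp
  have hderivsum : ∀ y : ℝ, |y| < 1 →
      Summable fun k : ℕ => gbinom b k * ((k : ℝ) * y ^ (k - 1)) := by
    intro y hy
    have hr0 : (0:ℝ) ≤ (1 + |y|) / 2 := by positivity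
    have hyr : |y| ≤ (1 + |y|) / 2 := by linarith
    have hr1 : (1 + |y|) / 2 < 1 := by linarith
    apply Summable.of_norm_bounded (hdsum _ hr0 hr1)
    intro k
    rw [norm_mul, norm_mul, Real.norm_natCast, norm_pow, Real.norm_eq_abs, Real.norm_eq_abs]
    exact mul_le_mul (hM k)
      (mul_le_mul_of_nonneg_left (pow_le_pow_left₀ (abs_nonneg y) hyr _) (Nat.cast_nonneg k))
      (by positivity) hM0
  have hderiv : ∀ y : ℝ, |y| < 1 → HasDerivAt (gS b) (gD b y) y := by
    intro y hy
    have hr0 : (0:ℝ) ≤ (1 + |y|) / 2 := by positivity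
    have hyr : |y| < (1 + |y|) / 2 := by linarith
    have hr1 : (1 + |y|) / 2 < 1 := by linarith
    exact hasDerivAt_tsum_of_isPreconnected (hdsum _ hr0 hr1) isOpen_Ioo
      (convex_Ioo (-((1 + |y|) / 2)) ((1 + |y|) / 2)).isPreconnected
      (fun k z _ => (hasDerivAt_pow k z).const_mul _)
      (fun k z hz => by
        rw [Real.norm_eq_abs, abs_mul, abs_mul, Nat.abs_cast, abs_pow]
        exact mul_le_mul (hM k)
          (mul_le_mul_of_nonneg_left
            (pow_le_pow_left₀ (abs_nonneg z) (abs_lt.2 ⟨hz.1, hz.2⟩).le _) (Nat.cast_nonneg k))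
          (by positivity) hM0)
      (y₀ := 0) (by constructor <;> [linarith [abs_nonneg y]; linarith [abs_nonneg y]])
      (hsum 0 (by simp)) (Set.mem_Ioo.2 (abs_lt.1 hyr))
  have hkey : ∀ y : ℝ, |y| < 1 → (1 + y) * gD b y = b * gS b y := by
    intro y hy
    have h1 : HasSum (fun k : ℕ => gbinom b k * ((k : ℝ) * y ^ (k - 1))) (gD b y) :=
      (hderivsum y hy).hasSum
    have he2 : (fun k : ℕ => y * (gbinom b k * ((k : ℝ) * y ^ (k - 1))))
        = fun k : ℕ => (k : ℝ) * gbinom b k * y ^ k := by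
      funext k
      cases k with
      | zero => simp
      | succ n => simp only [Nat.add_sub_cancel]; push_cast; ring
    have h2 : HasSum (fun k : ℕ => (k : ℝ) * gbinom b k * y ^ k) (y * gD b y) :=
      he2 ▸ (h1.mul_left y)
    have h3 : HasSum (fun k : ℕ => gbinom b (k + 1) * (((k + 1 : ℕ) : ℝ) * y ^ (k + 1 - 1)))
        (gD b y) := by
      refine (hasSum_nat_add_iff (f := fun k : ℕ => gbinom b k * ((k : ℝ) * y ^ (k - 1))) 1).2 ?_
      simpa using h1
    have he3 : (fun k : ℕ => gbinom b (k + 1) * (((k + 1 : ℕ) : ℝ) * y ^ (k + 1 - 1)))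
        = fun k : ℕ => (b - (k : ℝ)) * gbinom b k * y ^ k := by
      funext k
      rw [gbinom_succ]
      have hne : ((k : ℝ) + 1) ≠ 0 := by positivity
      simp only [Nat.add_sub_cancel]
      push_cast
      field_simp
    have h3' : HasSum (fun k : ℕ => (b - (k : ℝ)) * gbinom b k * y ^ k) (gD b y) := he3 ▸ h3
    have he5 : (fun k : ℕ => (b - (k : ℝ)) * gbinom b k * y ^ k + (k : ℝ) * gbinom b k * y ^ k)
        = fun k : ℕ => b * (gbinom b k * y ^ k) := by funext k; ring
    have h5 : HasSum (fun k : ℕ => b * (gbinom b k * y ^ k)) (gD b y + y * gD b y) :=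
      he5 ▸ (h3'.add h2)
    have h6 := (hsum y hy).hasSum.mul_left b
    have h7 := h5.unique h6
    have h8 : (∑' k : ℕ, gbinom b k * y ^ k) = gS b y := rfl
    rw [h8] at h7
    linear_combination h7
  have hconst : ∀ y ∈ Set.Ioo (-1 : ℝ) 1, gS b y * (1 + y) ^ (-b) = 1 := by
    have hderivh : ∀ y ∈ Set.Ioo (-1 : ℝ) 1,
        HasDerivWithinAt (fun z => gS b z * (1 + z) ^ (-b)) 0 (Set.Ioo (-1 : ℝ) 1) y := by
      intro y hy
      have hy1 : (0 : ℝ) < 1 + y := by linarith [hy.1]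
      have hyabs : |y| < 1 := abs_lt.2 ⟨hy.1, hy.2⟩
      have hr : HasDerivAt (fun z : ℝ => (1 + z) ^ (-b)) (-b * (1 + y) ^ (-b - 1)) y := by
        have h0 : HasDerivAt (fun z : ℝ => 1 + z) 1 y := (hasDerivAt_id y).const_add 1
        have h1 := (Real.hasDerivAt_rpow_const (x := 1 + y) (p := -b) (Or.inl hy1.ne')).comp y h0
        simpa [Function.comp_def] using h1
      have hprod := (hderiv y hyabs).mul hr
      have hpow : (1 + y) * (1 + y) ^ (-b - 1) = (1 + y) ^ (-b) := by
        have h := Real.rpow_add hy1 1 (-b - 1)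
        rw [show (1 : ℝ) + (-b - 1) = -b by ring, Real.rpow_one] at h
        exact h.symm
      have hk := hkey y hyabs
      have hval : gD b y * (1 + y) ^ (-b) + gS b y * (-b * (1 + y) ^ (-b - 1)) = 0 := by
        linear_combination (1 + y) ^ (-b - 1) * hk - gD b y * hpow
      rw [hval] at hprod
      exact hprod.hasDerivWithinAt
    intro y hy
    have h0 : (0 : ℝ) ∈ Set.Ioo (-1 : ℝ) 1 := by constructor <;> norm_num
    have hbnd := (convex_Ioo (-1 : ℝ) 1).norm_image_sub_le_of_norm_hasDerivWithin_le
      (C := 0) hderivh (fun x _ => by simp) h0 hy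
    have h00 : gS b y * (1 + y) ^ (-b) = gS b 0 * (1 + 0) ^ (-b) :=
      sub_eq_zero.1 (norm_le_zero_iff.1 (by simpa using hbnd))
    have hS0 : gS b 0 = 1 := by
      unfold gS
      rw [tsum_eq_single 0 (fun k hk => by simp [zero_pow hk])]
      simp [gbinom_zero]
    rw [h00, hS0]
    norm_num
  have hx' := abs_lt.1 hx
  have hx1 : (0 : ℝ) < 1 + x := by linarith [hx'.1]
  have hSx : gS b x = (1 + x) ^ b := by
    have h := hconst x ⟨hx'.1, hx'.2⟩
    have hmul : (1 + x) ^ (-b) * (1 + x) ^ b = 1 := by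
      rw [← Real.rpow_add hx1]; simp
    calc gS b x = gS b x * ((1 + x) ^ (-b) * (1 + x) ^ b) := by rw [hmul, mul_one]
      _ = (gS b x * (1 + x) ^ (-b)) * (1 + x) ^ b := by ring
      _ = (1 + x) ^ b := by rw [h, one_mul]
  have hfin := (hsum x hx).hasSum
  have h7 : ∑' k : ℕ, gbinom b k * x ^ k = (1 + x) ^ b := hSx
  rwa [h7] at hfin

theorem cellular_moment_activity_expansion (δ θ p b : ℝ) (hδ : δ ∈ Set.Ioo (0:ℝ) 1)
    (hθ : 0 < θ) (hp : p ∈ Set.Icc (0:ℝ) 1) (hb : 0 < b) :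
    Summable (fun k : ℕ => |(-1 : ℝ) ^ k * gbinom b (k + 1) * (p * θ) ^ (k + 1) *
      (δ * ∫ x in Set.Ioo (0:ℝ) 1,
        x ^ ((k + 1 : ℝ) - δ - 1) * (1 + θ * x) ^ (-(k + 1 : ℝ)))|) ∧
    2 * ∫ r in Set.Ioo (0:ℝ) 1,
        (1 - (1 - p * θ * r ^ (2 / δ) / (1 + θ * r ^ (2 / δ))) ^ b) * r ^ (-3 : ℝ) =
      ∑' k : ℕ, (-1 : ℝ) ^ k * gbinom b (k + 1) * (p * θ) ^ (k + 1) *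
        (δ * ∫ x in Set.Ioo (0:ℝ) 1,
          x ^ ((k + 1 : ℝ) - δ - 1) * (1 + θ * x) ^ (-(k + 1 : ℝ))) ∧
    ∀ k : ℕ, 1 ≤ k →
      δ * (∫ x in Set.Ioo (0:ℝ) 1, x ^ ((k : ℝ) - δ - 1) * (1 + θ * x) ^ (-(k : ℝ))) =
        δ / ((k : ℝ) - δ) * hyp2F1 (k : ℝ) ((k : ℝ) - δ) ((k : ℝ) + 1 - δ) (-θ) := by
  obtain ⟨hδ0, hδ1⟩ := hδ
  obtain ⟨hp0, hp1⟩ := hp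
  obtain ⟨M, hM0, hM⟩ := gbinom_abs_le b hb
  have h1θ : (0:ℝ) < 1 + θ := by linarith
  -- basic facts about the integrands
  have hbase : ∀ x ∈ Set.Ioo (0:ℝ) 1, (0:ℝ) < 1 + θ * x := by
    intro x hx; nlinarith [hx.1]
  have hxint : IntegrableOn (fun x : ℝ => x ^ (-δ)) (Set.Ioo (0:ℝ) 1) :=
    (intervalIntegral.integrableOn_Ioo_rpow_iff one_pos).2 (by linarith)
  have hfnn : ∀ (k : ℕ), ∀ x ∈ Set.Ioo (0:ℝ) 1,
      (0:ℝ) ≤ x ^ ((k:ℝ) + 1 - δ - 1) * (1 + θ * x) ^ (-((k:ℝ) + 1)) := by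
    intro k x hx
    exact mul_nonneg (Real.rpow_nonneg hx.1.le _) (Real.rpow_nonneg (hbase x hx).le _)
  have hcont : ∀ k : ℕ, ContinuousOn
      (fun x : ℝ => x ^ ((k:ℝ) + 1 - δ - 1) * (1 + θ * x) ^ (-((k:ℝ) + 1)))
      (Set.Ioo (0:ℝ) 1) := by
    intro k
    apply ContinuousOn.mul
    · exact continuousOn_id.rpow_const (fun x hx => Or.inl (ne_of_gt hx.1))
    · exact ((continuous_const.add (continuous_const.mul continuous_id)).continuousOn).rpow_const
        (fun x hx => Or.inl (ne_of_gt (hbase x hx)))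
  have hptw : ∀ (k : ℕ), ∀ x ∈ Set.Ioo (0:ℝ) 1,
      x ^ ((k:ℝ) + 1 - δ - 1) * (1 + θ * x) ^ (-((k:ℝ) + 1)) ≤ (1/(1+θ))^k * x ^ (-δ) := by
    intro k x hx
    obtain ⟨hx0, hx1⟩ := hx
    have hbx : (0:ℝ) < 1 + θ * x := by nlinarith
    have e1 : x ^ ((k:ℝ) + 1 - δ - 1) = x ^ (k:ℕ) * x ^ (-δ) := by
      rw [← Real.rpow_natCast x k, ← Real.rpow_add hx0]
      congr 1; ring
    have e2 : (1 + θ * x) ^ (-((k:ℝ) + 1)) = ((1 + θ * x) ^ (k+1 : ℕ))⁻¹ := by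
      rw [← Real.rpow_natCast (1 + θ * x) (k+1), ← Real.rpow_neg hbx.le]
      congr 1; push_cast; ring
    rw [e1, e2]
    have hr : x / (1 + θ * x) ≤ 1 / (1 + θ) := by
      rw [div_le_div_iff₀ hbx h1θ]; nlinarith
    calc x ^ (k:ℕ) * x ^ (-δ) * ((1 + θ * x) ^ (k+1 : ℕ))⁻¹
        = (x / (1 + θ * x))^(k:ℕ) * (x ^ (-δ) / (1 + θ * x)) := by
          rw [div_pow, pow_succ]
          field_simp
      _ ≤ (1/(1+θ))^k * x ^ (-δ) := by
          apply mul_le_mul (pow_le_pow_left₀ (by positivity) hr k)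
            (div_le_self (Real.rpow_nonneg hx0.le _) (by nlinarith))
            (by positivity) (by positivity)
  have hint : ∀ k : ℕ, IntegrableOn
      (fun x : ℝ => x ^ ((k:ℝ) + 1 - δ - 1) * (1 + θ * x) ^ (-((k:ℝ) + 1)))
      (Set.Ioo (0:ℝ) 1) := by
    intro k
    apply Integrable.mono' (hxint.const_mul ((1/(1+θ))^k))
      (((hcont k).aestronglyMeasurable measurableSet_Ioo))
    refine (ae_restrict_iff' measurableSet_Ioo).2 (Filter.Eventually.of_forall fun x hx => ?_)
    rw [Real.norm_eq_abs, abs_of_nonneg (hfnn k x hx)]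
    exact hptw k x hx
  set K := ∫ x in Set.Ioo (0:ℝ) 1, x ^ (-δ) with hK
  have hK0 : 0 ≤ K := setIntegral_nonneg measurableSet_Ioo fun x hx => Real.rpow_nonneg hx.1.le _
  have hIbound : ∀ k : ℕ,
      (∫ x in Set.Ioo (0:ℝ) 1, ‖x ^ ((k:ℝ) + 1 - δ - 1) * (1 + θ * x) ^ (-((k:ℝ) + 1))‖)
        ≤ (1/(1+θ))^k * K := by
    intro k
    have h := setIntegral_mono_on ((hint k).norm) (hxint.const_mul ((1/(1+θ))^k))
      measurableSet_Ioo (fun x hx => by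
        rw [Real.norm_eq_abs, abs_of_nonneg (hfnn k x hx)]
        exact hptw k x hx)
    rwa [integral_const_mul] at h
  -- Part 3 : Euler's integral representation
  have part3 : ∀ k : ℕ, 1 ≤ k →
      δ * (∫ x in Set.Ioo (0:ℝ) 1, x ^ ((k : ℝ) - δ - 1) * (1 + θ * x) ^ (-(k : ℝ))) =
        δ / ((k : ℝ) - δ) * hyp2F1 (k : ℝ) ((k : ℝ) - δ) ((k : ℝ) + 1 - δ) (-θ) := by
    intro k hk
    have hk1 : (1:ℝ) ≤ (k:ℝ) := by exact_mod_cast hk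
    have hkδ : (0:ℝ) < (k:ℝ) - δ := by linarith
    have hGpos := Real.Gamma_pos_of_pos hkδ
    unfold hyp2F1
    have hintc : (∫ t in Set.Ioo (0:ℝ) 1, t ^ ((k:ℝ) - δ - 1) *
        (1 - t) ^ ((k:ℝ) + 1 - δ - ((k:ℝ) - δ) - 1) * (1 - (-θ) * t) ^ (-(k:ℝ)))
        = ∫ x in Set.Ioo (0:ℝ) 1, x ^ ((k:ℝ) - δ - 1) * (1 + θ * x) ^ (-(k:ℝ)) := by
      apply setIntegral_congr_fun measurableSet_Ioo
      intro t ht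
      simp only [show (k:ℝ) + 1 - δ - ((k:ℝ) - δ) - 1 = 0 by ring, Real.rpow_zero, mul_one,
        show (1:ℝ) - -θ * t = 1 + θ * t by ring]
    rw [hintc, show (k:ℝ) + 1 - δ - ((k:ℝ) - δ) = 1 by ring, Real.Gamma_one,
      show (k:ℝ) + 1 - δ = ((k:ℝ) - δ) + 1 by ring, Real.Gamma_add_one hkδ.ne']
    field_simp
  -- pointwise binomial expansion of the integrand
  have hpt : ∀ x ∈ Set.Ioo (0:ℝ) 1,
      HasSum (fun k : ℕ => (-1 : ℝ) ^ k * gbinom b (k + 1) * (p * θ) ^ (k + 1) *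
          (x ^ ((k:ℝ) + 1 - δ - 1) * (1 + θ * x) ^ (-((k:ℝ) + 1))))
        ((1 - (1 - p * θ * x / (1 + θ * x)) ^ b) * x ^ (-δ - 1)) := by
    intro x hx
    obtain ⟨hx0, hx1⟩ := hx
    have hbx : (0:ℝ) < 1 + θ * x := by nlinarith
    have hu0 : 0 ≤ p * θ * x / (1 + θ * x) := by positivity
    have hu1 : p * θ * x / (1 + θ * x) < 1 := by
      rw [div_lt_one hbx]
      nlinarith [mul_le_mul_of_nonneg_right (show p * θ ≤ θ by nlinarith) hx0.le]
    have habs : |(-(p * θ * x / (1 + θ * x)))| < 1 := by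
      rw [abs_neg, abs_of_nonneg hu0]; exact hu1
    have h1 := hasSum_gbinom b hb habs
    have h2 : HasSum (fun k : ℕ => gbinom b (k + 1) * (-(p * θ * x / (1 + θ * x))) ^ (k + 1))
        ((1 + -(p * θ * x / (1 + θ * x))) ^ b - 1) := by
      refine (hasSum_nat_add_iff
        (f := fun k : ℕ => gbinom b k * (-(p * θ * x / (1 + θ * x))) ^ k) 1).2 ?_
      simpa [gbinom_zero] using h1
    have h3 := (h2.neg).mul_right (x ^ (-δ - 1))
    have heq : (fun k : ℕ => -(gbinom b (k + 1) * (-(p * θ * x / (1 + θ * x))) ^ (k + 1))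
          * x ^ (-δ - 1))
        = fun k : ℕ => (-1 : ℝ) ^ k * gbinom b (k + 1) * (p * θ) ^ (k + 1) *
          (x ^ ((k:ℝ) + 1 - δ - 1) * (1 + θ * x) ^ (-((k:ℝ) + 1))) := by
      funext k
      have e1 : x ^ ((k:ℝ) + 1 - δ - 1) = x ^ (k+1 : ℕ) * x ^ (-δ - 1) := by
        rw [← Real.rpow_natCast x (k+1), ← Real.rpow_add hx0]
        congr 1; push_cast; ring
      have e2 : (1 + θ * x) ^ (-((k:ℝ) + 1)) = ((1 + θ * x) ^ (k+1 : ℕ))⁻¹ := by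
        rw [← Real.rpow_natCast (1 + θ * x) (k+1), ← Real.rpow_neg hbx.le]
        congr 1; push_cast; ring
      rw [e1, e2, neg_pow, div_pow, mul_pow, mul_pow, pow_succ (-1:ℝ) k]
      have hne : ((1 + θ * x) ^ (k+1 : ℕ)) ≠ 0 := by positivity
      field_simp
    rw [heq] at h3
    have hval : -((1 + -(p * θ * x / (1 + θ * x))) ^ b - 1) * x ^ (-δ - 1) = (1 - (1 - p * θ * x / (1 + θ * x)) ^ b) * x ^ (-δ - 1) := by
      rw [show 1 + -(p * θ * x / (1 + θ * x)) = 1 - p * θ * x / (1 + θ * x) by ring]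
      ring
    rwa [hval] at h3
  -- integrability and summability of the series of integrals of norms
  have hFint : ∀ k : ℕ, Integrable (fun x : ℝ => (-1 : ℝ) ^ k * gbinom b (k + 1) *
      (p * θ) ^ (k + 1) * (x ^ ((k:ℝ) + 1 - δ - 1) * (1 + θ * x) ^ (-((k:ℝ) + 1))))
      (volume.restrict (Set.Ioo (0:ℝ) 1)) := by
    intro k
    exact (hint k).const_mul _
  have hq1 : θ / (1 + θ) < 1 := by rw [div_lt_one h1θ]; linarith
  have hcb : ∀ k : ℕ, |(-1 : ℝ) ^ k * gbinom b (k + 1) * (p * θ) ^ (k + 1)| ≤ M * θ ^ (k+1) := by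
    intro k
    rw [abs_mul, abs_mul, abs_pow, abs_neg, abs_one, one_pow, one_mul, abs_pow,
      abs_of_nonneg (mul_nonneg hp0 hθ.le)]
    exact mul_le_mul (hM (k+1)) (pow_le_pow_left₀ (mul_nonneg hp0 hθ.le) (by nlinarith) (k+1))
      (by positivity) hM0
  have hgeom : ∀ k : ℕ, M * θ ^ (k+1) * ((1/(1+θ))^k * K) = M * θ * K * (θ/(1+θ))^k := by
    intro k
    have h2 : θ^k * (1/(1+θ))^k = (θ/(1+θ))^k := by rw [← mul_pow, mul_one_div]
    calc M * θ^(k+1) * ((1/(1+θ))^k * K) = M * θ * K * (θ^k * (1/(1+θ))^k) := by ring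
      _ = M * θ * K * (θ/(1+θ))^k := by rw [h2]
  have hFnormsum : Summable (fun k : ℕ => ∫ x in Set.Ioo (0:ℝ) 1,
      ‖(-1 : ℝ) ^ k * gbinom b (k + 1) * (p * θ) ^ (k + 1) *
        (x ^ ((k:ℝ) + 1 - δ - 1) * (1 + θ * x) ^ (-((k:ℝ) + 1)))‖) := by
    apply Summable.of_nonneg_of_le (fun k => integral_nonneg fun x => norm_nonneg _)
      (fun k => ?_)
      (((summable_geometric_of_lt_one (by positivity) hq1).mul_left (M * θ * K)))
    have hnorm : (∫ x in Set.Ioo (0:ℝ) 1,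
        ‖(-1 : ℝ) ^ k * gbinom b (k + 1) * (p * θ) ^ (k + 1) *
          (x ^ ((k:ℝ) + 1 - δ - 1) * (1 + θ * x) ^ (-((k:ℝ) + 1)))‖)
        = |(-1 : ℝ) ^ k * gbinom b (k + 1) * (p * θ) ^ (k + 1)| *
          ∫ x in Set.Ioo (0:ℝ) 1, ‖x ^ ((k:ℝ) + 1 - δ - 1) * (1 + θ * x) ^ (-((k:ℝ) + 1))‖ := by
      rw [← integral_const_mul]
      apply setIntegral_congr_fun measurableSet_Ioo
      intro t ht
      simp only [norm_mul, Real.norm_eq_abs, abs_mul]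
    rw [hnorm, ← hgeom k]
    apply mul_le_mul (hcb k) (hIbound k) (integral_nonneg fun x => norm_nonneg _) (by positivity)
  -- Part 1 : summability
  have hcb' : ∀ k : ℕ, |(-1 : ℝ) ^ k| * |gbinom b (k + 1)| * |(p * θ) ^ (k + 1)|
      ≤ M * θ ^ (k+1) := by
    intro k
    rw [← abs_mul, ← abs_mul]
    exact hcb k
  have hsummable : Summable (fun k : ℕ => |(-1 : ℝ) ^ k * gbinom b (k + 1) * (p * θ) ^ (k + 1) *
      (δ * ∫ x in Set.Ioo (0:ℝ) 1,
        x ^ ((k:ℝ) + 1 - δ - 1) * (1 + θ * x) ^ (-((k:ℝ) + 1)))|) := by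
    apply Summable.of_nonneg_of_le (fun k => abs_nonneg _) (fun k => ?_)
      ((((summable_geometric_of_lt_one (by positivity) hq1).mul_left (M * θ * K)).mul_left δ))
    have hIk : |∫ x in Set.Ioo (0:ℝ) 1, x ^ ((k:ℝ) + 1 - δ - 1) * (1 + θ * x) ^ (-((k:ℝ) + 1))|
        ≤ (1/(1+θ))^k * K := by
      refine le_trans ?_ (hIbound k)
      rw [← Real.norm_eq_abs]
      exact norm_integral_le_integral_norm _
    simp only [abs_mul, abs_of_nonneg hδ0.le]
    calc |(-1 : ℝ) ^ k| * |gbinom b (k + 1)| * |(p * θ) ^ (k + 1)| *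
          (δ * |∫ x in Set.Ioo (0:ℝ) 1, x ^ ((k:ℝ) + 1 - δ - 1) * (1 + θ * x) ^ (-((k:ℝ) + 1))|)
        ≤ (M * θ ^ (k+1)) * (δ * ((1/(1+θ))^k * K)) := by
          apply mul_le_mul (hcb' k) (mul_le_mul_of_nonneg_left hIk hδ0.le)
            (by positivity) (by positivity)
      _ = δ * (M * θ ^ (k+1) * ((1/(1+θ))^k * K)) := by ring
      _ = δ * (M * θ * K * (θ/(1+θ))^k) := by rw [hgeom k]
  -- Part 2 : the substitution x = r^{2/δ} and term-by-term integration
  have hcomp : ∀ z : ℝ, 0 < z → (z ^ (δ/2)) ^ (2/δ) = z := by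
    intro z hz
    rw [← Real.rpow_mul hz.le,
      show δ/2*(2/δ) = 1 by rw [div_mul_div_comm, mul_comm δ 2]
                            exact div_self (by positivity : (0:ℝ) < 2*δ).ne',
      Real.rpow_one]
  have himg : (fun x : ℝ => x ^ (δ/2)) '' Set.Ioo 0 1 = Set.Ioo (0:ℝ) 1 := by
    ext y
    simp only [Set.mem_image, Set.mem_Ioo]
    constructor
    · rintro ⟨x, ⟨hx0, hx1⟩, rfl⟩
      exact ⟨Real.rpow_pos_of_pos hx0 _, Real.rpow_lt_one hx0.le hx1 (by positivity)⟩
    · rintro ⟨hy0, hy1⟩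
      refine ⟨y ^ (2/δ), ⟨Real.rpow_pos_of_pos hy0 _, Real.rpow_lt_one hy0.le hy1 (by positivity)⟩, ?_⟩
      rw [← Real.rpow_mul hy0.le,
        show 2/δ*(δ/2) = 1 by rw [div_mul_div_comm, mul_comm 2 δ]
                              exact div_self (by positivity : (0:ℝ) < δ*2).ne',
        Real.rpow_one]
  have hinj : Set.InjOn (fun x : ℝ => x ^ (δ/2)) (Set.Ioo 0 1) := by
    intro x hx y hy hxy
    have h := congrArg (fun z : ℝ => z ^ (2/δ)) hxy
    simp only at h
    rwa [hcomp x hx.1, hcomp y hy.1] at h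
  have hderivφ : ∀ x ∈ Set.Ioo (0:ℝ) 1, HasDerivWithinAt (fun x : ℝ => x ^ (δ/2))
      ((δ/2) * x ^ (δ/2 - 1)) (Set.Ioo 0 1) x :=
    fun x hx => (Real.hasDerivAt_rpow_const (Or.inl hx.1.ne')).hasDerivWithinAt
  have hsubst := integral_image_eq_integral_abs_deriv_smul measurableSet_Ioo hderivφ hinj
    (fun r : ℝ => (1 - (1 - p * θ * r ^ (2/δ) / (1 + θ * r ^ (2/δ))) ^ b) * r ^ (-3:ℝ))
  rw [himg] at hsubst
  have key2 : (∫ r in Set.Ioo (0:ℝ) 1,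
      (1 - (1 - p * θ * r ^ (2/δ) / (1 + θ * r ^ (2/δ))) ^ b) * r ^ (-3:ℝ))
      = ∫ x in Set.Ioo (0:ℝ) 1, (δ/2) * ((1 - (1 - p*θ*x/(1+θ*x))^b) * x^(-δ-1)) := by
    rw [hsubst]
    apply setIntegral_congr_fun measurableSet_Ioo
    intro x hx
    obtain ⟨hx0, hx1⟩ := hx
    have h32 : ((x:ℝ) ^ (δ/2)) ^ (-3:ℝ) = x ^ (δ/2 * (-3)) := (Real.rpow_mul hx0.le _ _).symm
    have hxadd : x ^ (δ/2 - 1) * x ^ (δ/2 * (-3)) = x ^ (-δ - 1) := by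
      rw [← Real.rpow_add hx0]; congr 1; ring
    simp only [smul_eq_mul]
    rw [hcomp x hx0, h32, abs_of_pos (mul_pos (by linarith) (Real.rpow_pos_of_pos hx0 _))]
    calc (δ/2) * x^(δ/2-1) * ((1 - (1 - p*θ*x/(1+θ*x))^b) * x^(δ/2 * (-3)))
        = (δ/2) * ((1 - (1 - p*θ*x/(1+θ*x))^b) * (x^(δ/2-1) * x^(δ/2*(-3)))) := by ring
      _ = (δ/2) * ((1 - (1 - p*θ*x/(1+θ*x))^b) * x^(-δ-1)) := by rw [hxadd]
  have hswap : (∫ x in Set.Ioo (0:ℝ) 1, (1 - (1 - p*θ*x/(1+θ*x))^b) * x^(-δ-1))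
      = ∑' k : ℕ, ∫ x in Set.Ioo (0:ℝ) 1, (-1:ℝ)^k * gbinom b (k+1) * (p*θ)^(k+1) *
        (x ^ ((k:ℝ)+1-δ-1) * (1+θ*x)^(-((k:ℝ)+1))) := by
    have h := MeasureTheory.integral_tsum_of_summable_integral_norm hFint hFnormsum
    calc (∫ x in Set.Ioo (0:ℝ) 1, (1 - (1 - p*θ*x/(1+θ*x))^b) * x^(-δ-1))
        = ∫ x in Set.Ioo (0:ℝ) 1, ∑' k : ℕ, (-1:ℝ)^k * gbinom b (k+1) * (p*θ)^(k+1) *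
            (x ^ ((k:ℝ)+1-δ-1) * (1+θ*x)^(-((k:ℝ)+1))) :=
          setIntegral_congr_fun measurableSet_Ioo (fun x hx => ((hpt x hx).tsum_eq).symm)
      _ = _ := h.symm
  refine ⟨hsummable, ?_, part3⟩
  calc 2 * ∫ r in Set.Ioo (0:ℝ) 1,
        (1 - (1 - p * θ * r ^ (2/δ) / (1 + θ * r ^ (2/δ))) ^ b) * r ^ (-3:ℝ)
      = 2 * ∫ x in Set.Ioo (0:ℝ) 1, (δ/2) * ((1 - (1 - p*θ*x/(1+θ*x))^b) * x^(-δ-1)) := by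
        rw [key2]
    _ = 2 * ((δ/2) * ∫ x in Set.Ioo (0:ℝ) 1, (1 - (1 - p*θ*x/(1+θ*x))^b) * x^(-δ-1)) := by
        rw [integral_const_mul]
    _ = δ * ∫ x in Set.Ioo (0:ℝ) 1, (1 - (1 - p*θ*x/(1+θ*x))^b) * x^(-δ-1) := by ring
    _ = δ * ∑' k : ℕ, ∫ x in Set.Ioo (0:ℝ) 1, (-1:ℝ)^k * gbinom b (k+1) * (p*θ)^(k+1) *
          (x ^ ((k:ℝ)+1-δ-1) * (1+θ*x)^(-((k:ℝ)+1))) := by rw [hswap]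
    _ = ∑' k : ℕ, δ * ∫ x in Set.Ioo (0:ℝ) 1, (-1:ℝ)^k * gbinom b (k+1) * (p*θ)^(k+1) *
          (x ^ ((k:ℝ)+1-δ-1) * (1+θ*x)^(-((k:ℝ)+1))) := tsum_mul_left.symm
    _ = ∑' k : ℕ, (-1 : ℝ) ^ k * gbinom b (k + 1) * (p * θ) ^ (k + 1) *
          (δ * ∫ x in Set.Ioo (0:ℝ) 1,
            x ^ ((k + 1 : ℝ) - δ - 1) * (1 + θ * x) ^ (-(k + 1 : ℝ))) := by
        apply tsum_congr
        intro k
        rw [integral_const_mul]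
        ring
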